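/- Let R be a regular F-finite ring of characteristic p, f ∈ R, and λ > 0 a real number. Then τ(f^{pλ}) ⊆ τ(f^λ)^{[p]}. -/

import Mathlib

/-- The `q`-th Frobenius power `I^{[q]}` of an ideal: the ideal generated by `q`-th powers
of elements of `I`. -/
def frobPow {R : Type*} [CommRing R] (I : Ideal R) (q : ℕ) : Ideal R :=
  Ideal.span ((fun x => x ^ q) '' (I : Set R))
/-- `I^{[1/q]}`: the smallest ideal `J` with `I ⊆ J^{[q]}` (in a regular ring). -/
noncomputable def frobRoot {R : Type*} [CommRing R] (I : Ideal R) (q : ℕ) : Ideal R :=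
  sInf {J : Ideal R | I ≤ frobPow J q}

/-- The generalized test ideal `τ(f^c) = ⋃_e (f^{⌈c p^e⌉})^{[1/p^e]}`. -/
noncomputable def testIdeal {R : Type*} [CommRing R] (p : ℕ) (f : R) (c : ℝ) : Ideal R :=
  ⨆ e : ℕ, frobRoot (Ideal.span {f ^ (⌈c * (p : ℝ) ^ e⌉₊)}) (p ^ e)

section Aux

variable {R : Type*} [CommRing R]

lemma frobPow_mono {I J : Ideal R} (h : I ≤ J) (q : ℕ) : frobPow I q ≤ frobPow J q :=
  Ideal.span_mono (Set.image_mono h)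

lemma mem_frobPow_of_mem {I : Ideal R} {x : R} (hx : x ∈ I) (q : ℕ) : x ^ q ∈ frobPow I q :=
  Ideal.subset_span ⟨x, hx, rfl⟩

lemma frobPow_mul_le (I : Ideal R) (a b : ℕ) : frobPow I (a * b) ≤ frobPow (frobPow I a) b := by
  rw [frobPow, Ideal.span_le]
  rintro _ ⟨x, hx, rfl⟩
  simpa [pow_mul] using mem_frobPow_of_mem (mem_frobPow_of_mem hx a) b

/-- Membership of `I • ⊤` in a finite free module is componentwise membership. -/
lemma mem_smul_top_pi {n : ℕ} (I : Ideal R) (x : Fin n → R) :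
    x ∈ I • (⊤ : Submodule R (Fin n → R)) ↔ ∀ i, x i ∈ I := by
  constructor
  · intro hx
    refine Submodule.smul_induction_on hx (fun r hr m _ i => ?_) (fun y z hy hz i => ?_)
    · exact Ideal.mul_mem_right _ _ hr
    · exact add_mem (hy i) (hz i)
  · intro h
    have hx : x = ∑ i : Fin n, x i • (Pi.single i 1 : Fin n → R) := by
      refine funext fun j => ?_
      rw [Finset.sum_apply]
      simp only [Pi.smul_apply, smul_eq_mul]
      rw [Finset.sum_eq_single j]
      · simp
      · intro i _ hij
        simp [Pi.single_apply, Ne.symm hij]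
      · simp
    rw [hx]
    exact Submodule.sum_mem _ fun i _ => Submodule.smul_mem_smul (h i) trivial

/-- A finite flat module over a Noetherian ring is projective. -/
lemma projective_of_flat_finite {M : Type*} [IsNoetherianRing R] [AddCommGroup M] [Module R M]
    [Module.Finite R M] [Module.Flat R M] : Module.Projective R M := by
  have := Module.finitePresentation_of_finite R M
  apply Module.projective_of_localization_maximal
  intro I hI
  have h1 : Module.Flat (Localization.AtPrime I) (LocalizedModule I.primeCompl M) :=
    Module.Flat.of_isLocalizedModule (Rp := Localization.AtPrime I) I.primeCompl
      (LocalizedModule.mkLinearMap I.primeCompl M)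
  have h2 : Module.Free (Localization.AtPrime I) (LocalizedModule I.primeCompl M) :=
    Module.free_of_flat_of_isLocalRing
  infer_instance

/-- For a finite flat module over a Noetherian ring, `I ↦ I • ⊤` commutes with arbitrary
intersections (one inclusion; the other is trivial). -/
lemma iInf_smul_top_le {M : Type*} [IsNoetherianRing R] [AddCommGroup M] [Module R M]
    [Module.Finite R M] [Module.Flat R M] {ι : Sort*} (I : ι → Ideal R) :
    (⨅ a, I a • (⊤ : Submodule R M)) ≤ (⨅ a, I a) • ⊤ := by
  have hproj : Module.Projective R M := projective_of_flat_finite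
  obtain ⟨n, π, hπ⟩ := Module.Finite.exists_fin' R M
  obtain ⟨s, hs⟩ := Module.projective_lifting_property π LinearMap.id hπ
  intro x hx
  rw [Submodule.mem_iInf] at hx
  have h1 : ∀ a, s x ∈ I a • (⊤ : Submodule R (Fin n → R)) := by
    intro a
    have : s x ∈ Submodule.map s (I a • ⊤) := Submodule.mem_map_of_mem (hx a)
    rw [Submodule.map_smul''] at this
    exact Submodule.smul_mono le_rfl le_top this
  have h2 : s x ∈ (⨅ a, I a) • (⊤ : Submodule R (Fin n → R)) := by
    rw [mem_smul_top_pi]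
    intro i
    rw [Submodule.mem_iInf]
    intro a
    exact (mem_smul_top_pi _ _).mp (h1 a) i
  have hx' : x = π (s x) := by
    conv_lhs => rw [← LinearMap.id_apply (R := R) x, ← hs]
    rfl
  rw [hx']
  have : π (s x) ∈ Submodule.map π ((⨅ a, I a) • ⊤) := Submodule.mem_map_of_mem h2
  rw [Submodule.map_smul''] at this
  exact Submodule.smul_mono le_rfl le_top this

/-- Membership of `I • ⊤` where the module structure on `S` comes from `φ : R →+* S`
is membership in the extension `I.map φ`. -/
lemma mem_smul_top_iff_map {S : Type*} [CommRing S] [Module R S] (φ : R →+* S)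
    (hsmul : ∀ (r : R) (s : S), r • s = φ r * s) (I : Ideal R) (x : S) :
    x ∈ I • (⊤ : Submodule R S) ↔ x ∈ I.map φ := by
  have key : ∀ (a : S) (y : S), y ∈ I • (⊤ : Submodule R S) → a * y ∈ I • (⊤ : Submodule R S) := by
    intro a y hy
    refine Submodule.smul_induction_on hy (fun r hr m _ => ?_) (fun u v hu hv => ?_)
    · have : a * (r • m) = r • (a * m) := by rw [hsmul, hsmul]; ring
      rw [this]
      exact Submodule.smul_mem_smul hr trivial
    · rw [mul_add]; exact add_mem hu hv
  constructor
  · intro hx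
    refine Submodule.smul_induction_on hx (fun r hr m _ => ?_) (fun u v hu hv => add_mem hu hv)
    rw [hsmul]
    exact Ideal.mul_mem_right m _ (Ideal.mem_map_of_mem φ hr)
  · intro hx
    refine Submodule.span_induction (fun y hy => ?_) (zero_mem _) (fun u v _ _ hu hv => add_mem hu hv)
      (fun a u _ hu => ?_) hx
    · obtain ⟨r, hr, rfl⟩ := hy
      have : φ r = r • (1 : S) := by rw [hsmul, mul_one]
      rw [this]
      exact Submodule.smul_mem_smul hr trivial
    · exact key a u hu

/-- Extension of ideals along a ring map which is flat and finite commutes with arbitrary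
intersections. -/
lemma iInf_map_le {S : Type*} [IsNoetherianRing R] [CommRing S] [Module R S]
    [Module.Finite R S] [Module.Flat R S] (φ : R →+* S)
    (hsmul : ∀ (r : R) (s : S), r • s = φ r * s) {ι : Sort*} (I : ι → Ideal R) :
    (⨅ a, (I a).map φ) ≤ (⨅ a, I a).map φ := by
  intro x hx
  rw [← mem_smul_top_iff_map φ hsmul]
  refine iInf_smul_top_le I ?_
  rw [Submodule.mem_iInf]
  intro a
  rw [mem_smul_top_iff_map φ hsmul]
  exact (Submodule.mem_iInf _).mp hx a

variable (p : ℕ) [ExpChar R p]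

lemma frobPow_eq_map (I : Ideal R) (e : ℕ) :
    frobPow I (p ^ e) = I.map (iterateFrobenius R p e) := by
  rw [frobPow, Ideal.map]
  congr 1

lemma frobPow_p_eq_map (I : Ideal R) : frobPow I p = I.map (frobenius R p) := by
  have := frobPow_eq_map (R := R) p I 1
  rwa [pow_one, iterateFrobenius_one] at this

lemma frobPow_pow_succ (I : Ideal R) (e : ℕ) :
    frobPow I (p ^ (e + 1)) = frobPow (frobPow I p) (p ^ e) := by
  rw [frobPow_eq_map, frobPow_eq_map, frobPow_p_eq_map, Ideal.map_map,
    ← iterateFrobenius_one R p, ← iterateFrobenius_add]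

/-- Frobenius powers commute with arbitrary intersections when Frobenius is flat and finite. -/
lemma iInf_frobPow_le [IsNoetherianRing R]
    (hflat : @Module.Flat R R _ _ (Module.compHom R (frobenius R p)))
    (hFfin : @Module.Finite R R _ _ (Module.compHom R (frobenius R p)))
    (e : ℕ) {ι : Sort*} (I : ι → Ideal R) :
    (⨅ a, frobPow (I a) (p ^ e)) ≤ frobPow (⨅ a, I a) (p ^ e) := by
  induction e generalizing I with
  | zero =>
    simp only [frobPow_eq_map p _ 0, iterateFrobenius_zero, Ideal.map_id]
    exact le_rfl
  | succ e ih =>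
    simp only [frobPow_pow_succ]
    refine le_trans (ih _) (frobPow_mono ?_ _)
    have base : (⨅ a, (I a).map (frobenius R p)) ≤ (⨅ a, I a).map (frobenius R p) :=
      @iInf_map_le R _ R _ _ (Module.compHom R (frobenius R p)) hFfin hflat (frobenius R p)
        (fun _ _ => rfl) _ I
    simpa only [frobPow_p_eq_map] using base

end Aux

/-- `τ(f^{pλ}) ⊆ τ(f^λ)^{[p]}` for `λ > 0` in a regular `F`-finite ring of characteristic `p`. -/
theorem stmt6 {R : Type*} [CommRing R] [IsDomain R] [IsNoetherianRing R]
    (p : ℕ) [Fact p.Prime] [CharP R p] [ExpChar R p]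
    (hflat : @Module.Flat R R _ _ (Module.compHom R (frobenius R p)))
    (hFfin : @Module.Finite R R _ _ (Module.compHom R (frobenius R p)))
    (f : R) (lam : ℝ) (hlam : 0 < lam) :
    testIdeal p f ((p : ℝ) * lam) ≤ frobPow (testIdeal p f lam) p := by
  rw [testIdeal]
  refine iSup_le fun e => ?_
  have hexp : ⌈(p : ℝ) * lam * (p : ℝ) ^ e⌉₊ = ⌈lam * (p : ℝ) ^ (e + 1)⌉₊ := by
    congr 1
    ring
  rw [hexp]
  set I : Ideal R := Ideal.span {f ^ ⌈lam * (p : ℝ) ^ (e + 1)⌉₊} with hI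
  set K : Ideal R := frobRoot I (p ^ (e + 1)) with hK
  -- Step 1: `I ≤ frobPow K (p^(e+1))` using flatness.
  have hIK : I ≤ frobPow K (p ^ (e + 1)) := by
    have h1 : I ≤ ⨅ (J : {J : Ideal R // I ≤ frobPow J (p ^ (e + 1))}), frobPow J.1 (p ^ (e + 1)) := by
      rw [le_iInf_iff]
      exact fun J => J.2
    refine le_trans h1 (le_trans (iInf_frobPow_le p hflat hFfin _ _) (frobPow_mono ?_ _))
    rw [hK, frobRoot, sInf_eq_iInf']
    rfl
  -- Step 2: `frobPow K p` witnesses the `sInf` defining `frobRoot I (p^e)`.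
  have hmem : I ≤ frobPow (frobPow K p) (p ^ e) := by
    refine le_trans hIK ?_
    rw [pow_succ' p e]
    exact frobPow_mul_le K p (p ^ e)
  rw [frobRoot]
  refine le_trans (sInf_le hmem) (frobPow_mono ?_ p)
  rw [testIdeal]
  exact le_iSup (fun k => frobRoot (Ideal.span {f ^ ⌈lam * (p : ℝ) ^ k⌉₊}) (p ^ k)) (e + 1)
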